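/- Let G be a set of 12 agents and C a set of colours containing three distinct colours white, black, rose, and let δ : G → C assign white to exactly 2 agents, black to exactly 2 agents, and rose to the remaining 8 agents. Take S = S* = {δ' : G → C | for every g there is h ≠ g with δ' h = δ' g}. Then K_0(δ) is exactly the set of the four white- and black-hatted agents, and K_1(δ) = G: the white and black gnomes leave at the first ring of the bell and the rose gnomes at the second. -/

import Mathlib

/-- Worlds `δ, δ'` are `g`-similar: they agree on all agents other than `g`. -/
def gSim {G C : Type*} (g : G) (δ δ' : G → C) : Prop := ∀ h, h ≠ g → δ h = δ' h

/-- The iterated bell dynamics: `bellSim S n g δ δ'` is the stage-`n` indistinguishability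
relation `δ ~_g^n δ'` on `S`. At stage `n+1` the relation is refined by the exact set of
knowers (the fine bell dynamics). -/
def bellSim {G C : Type*} (S : Set (G → C)) : ℕ → G → (G → C) → (G → C) → Prop
  | 0 => fun g δ δ' => δ ∈ S ∧ δ' ∈ S ∧ gSim g δ δ'
  | n + 1 => fun g δ δ' => bellSim S n g δ δ' ∧
      {x | ∀ ε, bellSim S n x δ ε → ε x = δ x} =
        {x | ∀ ε, bellSim S n x δ' ε → ε x = δ' x}

/-- The knower set `K_n(δ)`: agents who know their own colour at `δ` at stage `n`. -/
def knows {G C : Type*} (S : Set (G → C)) (n : ℕ) (δ : G → C) : Set G :=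
  {g | ∀ δ', bellSim S n g δ δ' → δ' g = δ g}

/-- `S` is invariant under permutations of the colours. -/
def permInv {G C : Type*} (S : Set (G → C)) : Prop :=
  ∀ ι : C ≃ C, ∀ δ ∈ S, (⇑ι ∘ δ) ∈ S

/-- `S` is solvable: every agent eventually knows its colour at every world of `S`. -/
def solvable {G C : Type*} (S : Set (G → C)) : Prop :=
  ∀ δ ∈ S, ∀ g : G, ∃ n : ℕ, g ∈ knows S n δ

/-- `S*`: the worlds without unique colours (every worn colour is worn at least twice). -/
def Sstar (G C : Type*) : Set (G → C) := {δ | ∀ g, ∃ h, h ≠ g ∧ δ h = δ g}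

section Aux
variable {G : Type*}

lemma avoid1 {A : Set G} (h : 2 ≤ A.ncard) (x : G) : ∃ z ∈ A, z ≠ x := by
  by_contra hc
  push_neg at hc
  have hsub : A ⊆ {x} := fun z hz => hc z hz
  have := Set.ncard_le_ncard hsub (Set.toFinite _)
  simp [Set.ncard_singleton] at this
  omega

lemma avoid2 {A : Set G} (h : 3 ≤ A.ncard) (x y : G) : ∃ z ∈ A, z ≠ x ∧ z ≠ y := by
  by_contra hc
  push_neg at hc
  have hsub : A ⊆ {x, y} := by
    intro z hz
    by_cases hzx : z = x
    · exact Or.inl hzx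
    · exact Or.inr (hc z hz hzx)
  have h1 := Set.ncard_le_ncard hsub (Set.toFinite _)
  have h2 : ({x, y} : Set G).ncard ≤ 2 := by
    have := Set.ncard_insert_le x ({y} : Set G)
    simpa [Set.ncard_singleton] using this
  omega

lemma avoid3 {A : Set G} (h : 4 ≤ A.ncard) (x y w : G) : ∃ z ∈ A, z ≠ x ∧ z ≠ y ∧ z ≠ w := by
  by_contra hc
  push_neg at hc
  have hsub : A ⊆ {x, y, w} := by
    intro z hz
    by_cases hzx : z = x
    · exact Or.inl hzx
    by_cases hzy : z = y
    · exact Or.inr (Or.inl hzy)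
    · exact Or.inr (Or.inr (hc z hz hzx hzy))
  have h1 := Set.ncard_le_ncard hsub (Set.toFinite _)
  have h2 : ({x, y, w} : Set G).ncard ≤ 3 := by
    have a1 := Set.ncard_insert_le x ({y, w} : Set G)
    have a2 := Set.ncard_insert_le y ({w} : Set G)
    simp [Set.ncard_singleton] at a1 a2 ⊢
    omega
  omega

end Aux

section Core
variable {G C : Type*} [Fintype G] [DecidableEq G] {δ : G → C} {a b r : C}

/-- Rose class has 8 elements. -/
lemma rose_card (hG : Fintype.card G = 12) (hab : a ≠ b) (har : a ≠ r) (hbr : b ≠ r)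
    (ha : {g : G | δ g = a}.ncard = 2) (hb : {g : G | δ g = b}.ncard = 2)
    (hr : ∀ g, δ g ≠ a → δ g ≠ b → δ g = r) :
    {g : G | δ g = r}.ncard = 8 := by
  set A := {g : G | δ g = a}
  set B := {g : G | δ g = b}
  set R := {g : G | δ g = r}
  have hAB : Disjoint A B := by
    rw [Set.disjoint_left]
    intro g hgA hgB
    exact hab (hgA.symm.trans hgB)
  have hABR : Disjoint (A ∪ B) R := by
    rw [Set.disjoint_left]
    rintro g (hg | hg) hgR
    · exact har (hg.symm.trans hgR)
    · exact hbr (hg.symm.trans hgR)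
  have hcover : A ∪ B ∪ R = Set.univ := by
    ext g
    simp only [Set.mem_union, Set.mem_univ, iff_true]
    by_cases h1 : δ g = a
    · exact Or.inl (Or.inl h1)
    by_cases h2 : δ g = b
    · exact Or.inl (Or.inr h2)
    · exact Or.inr (hr g h1 h2)
  have h1 : (A ∪ B ∪ R).ncard = (A ∪ B).ncard + R.ncard :=
    Set.ncard_union_eq hABR (Set.toFinite _) (Set.toFinite _)
  have h2 : (A ∪ B).ncard = A.ncard + B.ncard :=
    Set.ncard_union_eq hAB (Set.toFinite _) (Set.toFinite _)
  have h3 : (A ∪ B ∪ R).ncard = 12 := by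
    rw [hcover, Set.ncard_univ, Nat.card_eq_fintype_card, hG]
  omega

/-- δ itself is in S*. -/
lemma delta_mem (hG : Fintype.card G = 12) (hab : a ≠ b) (har : a ≠ r) (hbr : b ≠ r)
    (ha : {g : G | δ g = a}.ncard = 2) (hb : {g : G | δ g = b}.ncard = 2)
    (hr : ∀ g, δ g ≠ a → δ g ≠ b → δ g = r) :
    δ ∈ Sstar G C := by
  have hR := rose_card hG hab har hbr ha hb hr
  intro g
  by_cases h1 : δ g = a
  · obtain ⟨z, hz, hzg⟩ := avoid1 ha.ge g
    exact ⟨z, hzg, by rw [hz, h1]⟩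
  by_cases h2 : δ g = b
  · obtain ⟨z, hz, hzg⟩ := avoid1 hb.ge g
    exact ⟨z, hzg, by rw [hz, h2]⟩
  · have h3 := hr g h1 h2
    obtain ⟨z, hz, hzg⟩ := avoid1 (by rw [hR]; norm_num : 2 ≤ {g : G | δ g = r}.ncard) g
    exact ⟨z, hzg, by rw [hz, h3]⟩

/-- Updating a rose gnome to `a` stays in S*. -/
lemma update_mem (hG : Fintype.card G = 12) (hab : a ≠ b) (har : a ≠ r) (hbr : b ≠ r)
    (ha : {g : G | δ g = a}.ncard = 2) (hb : {g : G | δ g = b}.ncard = 2)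
    (hr : ∀ g, δ g ≠ a → δ g ≠ b → δ g = r) {g : G} (hg : δ g = r) :
    Function.update δ g a ∈ Sstar G C := by
  have hR := rose_card hG hab har hbr ha hb hr
  intro x
  by_cases hxg : x = g
  · subst hxg
    obtain ⟨z, hz, _⟩ := avoid1 ha.ge x
    have hzx : z ≠ x := fun h => har (by rw [← hz, h]; exact hg)
    refine ⟨z, hzx, ?_⟩
    rw [Function.update_of_ne hzx, Function.update_self, hz]
  · rw [Function.update_of_ne hxg]
    by_cases h1 : δ x = a
    · exact ⟨g, Ne.symm hxg, by rw [Function.update_self, h1]⟩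
    by_cases h2 : δ x = b
    · obtain ⟨z, hz, hzx⟩ := avoid1 hb.ge x
      have hzg : z ≠ g := fun h => hbr (by rw [← hz, h, hg])
      exact ⟨z, hzx, by rw [Function.update_of_ne hzg, hz, h2]⟩
    · have h3 := hr x h1 h2
      obtain ⟨z, hz, hzx, hzg⟩ := avoid2 (by rw [hR]; norm_num : 3 ≤ {g : G | δ g = r}.ncard) x g
      exact ⟨z, hzx, by rw [Function.update_of_ne hzg, hz, h3]⟩

/-- Double update: rose gnome g → a, then a-gnome w → b; stays in S*. -/
lemma update2_mem (hG : Fintype.card G = 12) (hab : a ≠ b) (har : a ≠ r) (hbr : b ≠ r)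
    (ha : {g : G | δ g = a}.ncard = 2) (hb : {g : G | δ g = b}.ncard = 2)
    (hr : ∀ g, δ g ≠ a → δ g ≠ b → δ g = r) {g w : G} (hg : δ g = r) (hw : δ w = a) :
    Function.update (Function.update δ g a) w b ∈ Sstar G C := by
  have hR := rose_card hG hab har hbr ha hb hr
  have hgw : g ≠ w := fun h => har (by rw [← hw, ← h, hg])
  set δ'' := Function.update (Function.update δ g a) w b with hδ''
  have e_w : δ'' w = b := Function.update_self _ _ _
  have e_g : δ'' g = a := by
    rw [hδ'', Function.update_of_ne hgw, Function.update_self]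
  have e_other : ∀ x, x ≠ w → x ≠ g → δ'' x = δ x := fun x h1 h2 => by
    rw [hδ'', Function.update_of_ne h1, Function.update_of_ne h2]
  intro x
  by_cases hxw : x = w
  · subst hxw
    obtain ⟨z, hz, hzx⟩ := avoid1 hb.ge x
    have hzg : z ≠ g := fun h => hbr (by rw [← hz, h, hg])
    exact ⟨z, hzx, by rw [e_other z hzx hzg, hz, e_w]⟩
  by_cases hxg : x = g
  · subst hxg
    obtain ⟨z, hz, hzw⟩ := avoid1 ha.ge w
    have hzg : z ≠ x := fun h => har (by rw [← hz, h, hg])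
    exact ⟨z, hzg, by rw [e_other z hzw hzg, hz, e_g]⟩
  · rw [e_other x hxw hxg]
    by_cases h1 : δ x = a
    · exact ⟨g, Ne.symm hxg, by rw [e_g, h1]⟩
    by_cases h2 : δ x = b
    · exact ⟨w, Ne.symm hxw, by rw [e_w, h2]⟩
    · have h3 := hr x h1 h2
      obtain ⟨z, hz, hzx, hzg, hzw⟩ :=
        avoid3 (by rw [hR]; norm_num : 4 ≤ {g : G | δ g = r}.ncard) x g w
      exact ⟨z, hzx, by rw [e_other z hzw hzg, hz, h3]⟩

/-- An a-gnome knows its colour at stage 0. -/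
lemma knows_a (ha : {g : G | δ g = a}.ncard = 2) {g : G} (hg : δ g = a) :
    g ∈ knows (Sstar G C) 0 δ := by
  intro δ' hbs
  obtain ⟨hδ, hδ', hsim⟩ := hbs
  obtain ⟨w, hw, hwg⟩ := avoid1 ha.ge g
  have hA : {x : G | δ x = a} = {g, w} := by
    refine (Set.eq_of_subset_of_ncard_le ?_ ?_ (Set.toFinite _)).symm
    · rintro x (rfl | rfl)
      · exact hg
      · exact hw
    · rw [ha, Set.ncard_pair (Ne.symm hwg)]
  have hδ'w : δ' w = a := by rw [← hsim w hwg, hw]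
  obtain ⟨h, hhw, hh⟩ := hδ' w
  rw [hδ'w] at hh
  by_cases hhg : h = g
  · subst hhg; rw [hh, hg]
  · have : δ h = a := by rw [← hh]; exact hsim h hhg
    have : h ∈ ({g, w} : Set G) := hA ▸ this
    rcases this with h1 | h1
    · exact absurd h1 hhg
    · exact absurd h1 hhw

/-- A rose gnome does not know at stage 0. -/
lemma rose_not_knows (hG : Fintype.card G = 12) (hab : a ≠ b) (har : a ≠ r) (hbr : b ≠ r)
    (ha : {g : G | δ g = a}.ncard = 2) (hb : {g : G | δ g = b}.ncard = 2)
    (hr : ∀ g, δ g ≠ a → δ g ≠ b → δ g = r) {g : G} (hg : δ g = r) :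
    g ∉ knows (Sstar G C) 0 δ := by
  intro hk
  have := hk (Function.update δ g a)
    ⟨delta_mem hG hab har hbr ha hb hr,
     update_mem hG hab har hbr ha hb hr hg,
     fun h hh => (Function.update_of_ne hh a δ).symm⟩
  rw [Function.update_self, hg] at this
  exact har this

/-- After a rose gnome g switches to a, an a-gnome w no longer knows at stage 0. -/
lemma a_not_knows_update (hG : Fintype.card G = 12) (hab : a ≠ b) (har : a ≠ r) (hbr : b ≠ r)
    (ha : {g : G | δ g = a}.ncard = 2) (hb : {g : G | δ g = b}.ncard = 2)
    (hr : ∀ g, δ g ≠ a → δ g ≠ b → δ g = r) {g w : G} (hg : δ g = r) (hw : δ w = a) :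
    w ∉ knows (Sstar G C) 0 (Function.update δ g a) := by
  intro hk
  have hgw : g ≠ w := fun h => har (by rw [← hw, ← h, hg])
  have := hk (Function.update (Function.update δ g a) w b)
    ⟨update_mem hG hab har hbr ha hb hr hg,
     update2_mem hG hab har hbr ha hb hr hg hw,
     fun h hh => (Function.update_of_ne hh b (Function.update δ g a)).symm⟩
  rw [Function.update_self, Function.update_of_ne (Ne.symm hgw), hw] at this
  exact hab this.symm

end Core

/-- Twelve gnomes, 2 white, 2 black and 8 rose hats, in the restriction `S*`: `K_0(δ)` is
exactly the set of the four white- and black-hatted gnomes (they leave at the first ring)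
and `K_1(δ) = G` (the rose gnomes leave at the second ring). -/
theorem stmt_7 {G C : Type*} [Fintype G] (hG : Fintype.card G = 12)
    (white black rose : C) (hwb : white ≠ black) (hwr : white ≠ rose) (hbr : black ≠ rose)
    (δ : G → C)
    (hwhite : {g : G | δ g = white}.ncard = 2)
    (hblack : {g : G | δ g = black}.ncard = 2)
    (hrose : ∀ g : G, δ g ≠ white → δ g ≠ black → δ g = rose) :
    knows (Sstar G C) 0 δ = {g : G | δ g = white ∨ δ g = black} ∧
      knows (Sstar G C) 1 δ = Set.univ := by
  classical
  have hrose' : ∀ g : G, δ g ≠ black → δ g ≠ white → δ g = rose := fun g h1 h2 => hrose g h2 h1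
  have hK0 : knows (Sstar G C) 0 δ = {g : G | δ g = white ∨ δ g = black} := by
    ext g
    constructor
    · intro hk
      by_contra hc
      simp only [Set.mem_setOf_eq, not_or] at hc
      exact rose_not_knows hG hwb hwr hbr hwhite hblack hrose (hrose g hc.1 hc.2) hk
    · rintro (hg | hg)
      · exact knows_a hwhite hg
      · exact knows_a hblack hg
  refine ⟨hK0, ?_⟩
  ext g
  simp only [Set.mem_univ, iff_true]
  intro δ' hbs
  obtain ⟨⟨hδS, hδ'S, hsim⟩, hKeq⟩ := hbs
  by_cases h1 : δ g = white
  · exact knows_a hwhite h1 δ' ⟨hδS, hδ'S, hsim⟩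
  by_cases h2 : δ g = black
  · exact knows_a hblack h2 δ' ⟨hδS, hδ'S, hsim⟩
  have hg : δ g = rose := hrose g h1 h2
  by_cases h3 : δ' g = rose
  · rw [h3, hg]
  obtain ⟨h, hhg, hh⟩ := hδ'S g
  have hδh : δ h = δ' g := by rw [hsim h hhg]; exact hh
  have hcase : δ' g = white ∨ δ' g = black := by
    by_contra hc
    push_neg at hc
    have := hrose h (by rw [hδh]; exact hc.1) (by rw [hδh]; exact hc.2)
    exact h3 (hδh.symm.trans this)
  exfalso
  rcases hcase with hcw | hcb
  · have hδ'eq : δ' = Function.update δ g white := by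
      funext x
      by_cases hx : x = g
      · subst hx; rw [Function.update_self, hcw]
      · rw [Function.update_of_ne hx, ← hsim x hx]
    obtain ⟨w, hw, _⟩ := avoid1 hwhite.ge g
    have hw1 : w ∈ {x | ∀ ε, bellSim (Sstar G C) 0 x δ ε → ε x = δ x} := knows_a hwhite hw
    have hw2' : w ∈ {x | ∀ ε, bellSim (Sstar G C) 0 x δ' ε → ε x = δ' x} := hKeq ▸ hw1
    have hw2 : w ∈ knows (Sstar G C) 0 δ' := hw2'
    rw [hδ'eq] at hw2
    exact a_not_knows_update hG hwb hwr hbr hwhite hblack hrose hg hw hw2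
  · have hδ'eq : δ' = Function.update δ g black := by
      funext x
      by_cases hx : x = g
      · subst hx; rw [Function.update_self, hcb]
      · rw [Function.update_of_ne hx, ← hsim x hx]
    obtain ⟨w, hw, _⟩ := avoid1 hblack.ge g
    have hw1 : w ∈ {x | ∀ ε, bellSim (Sstar G C) 0 x δ ε → ε x = δ x} := knows_a hblack hw
    have hw2' : w ∈ {x | ∀ ε, bellSim (Sstar G C) 0 x δ' ε → ε x = δ' x} := hKeq ▸ hw1
    have hw2 : w ∈ knows (Sstar G C) 0 δ' := hw2'
    rw [hδ'eq] at hw2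
    exact a_not_knows_update hG hwb.symm hbr hwr hblack hwhite hrose' hg hw hw2
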